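/- Let 1 < γ ≤ 7/4 and f_γ(z) = h(z) + conj(g(z)) with h(z) = (1 - (1-z)^γ)/γ and g(z) = (1 - (1+γz)(1-z)^γ)/(γ(1+γ)) (principal branches). Then for every z ∈ 𝔻, Im(f_γ(z)) = -|1-z|^{γ+1} · sin((γ+1)·Arg(1-z)) / (γ+1), where Arg denotes the principal argument. -/

import Mathlib

open Complex Metric

theorem stmt_5 (γ : ℝ) (hγ : 1 < γ ∧ γ ≤ 7/4)
    (f : ℂ → ℂ)
    (hf : ∀ z : ℂ, f z = (1 - (1 - z) ^ (γ : ℂ)) / (γ : ℂ) +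
      starRingEnd ℂ ((1 - (1 + (γ : ℂ) * z) * (1 - z) ^ (γ : ℂ)) / ((γ : ℂ) * (1 + γ)))) :
    ∀ z ∈ ball (0 : ℂ) 1,
      (f z).im = -(‖1 - z‖) ^ (γ + 1) *
        Real.sin ((γ + 1) * Complex.arg (1 - z)) / (γ + 1) := by
  obtain ⟨hγ1, hγ2⟩ := hγ
  have hγ0 : γ ≠ 0 := by linarith
  have h1γ : (1:ℝ) + γ ≠ 0 := by linarith
  intro z hz
  have hzre : z.re < 1 := lt_of_le_of_lt (Complex.re_le_norm z) (by simpa using hz)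
  have hre : 0 < (1 - z).re := by simp [Complex.sub_re]; linarith
  have hw : (1 - z) ≠ 0 := by intro h; rw [h] at hre; simp at hre
  have habs : 0 < ‖1 - z‖ := norm_pos_iff.mpr hw
  have hmul : (1 - z) ^ (γ:ℂ) * (1 - z) = (1 - z) ^ ((γ:ℂ)+1) := by
    rw [Complex.cpow_add _ _ hw, Complex.cpow_one]
  have him : ((1 - z) ^ ((γ:ℂ)+1)).im
      = (‖1 - z‖) ^ (γ + 1) * Real.sin ((γ + 1) * Complex.arg (1 - z)) := by
    rw [Complex.cpow_def_of_ne_zero hw, Complex.exp_im]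
    have : ((γ:ℂ)+1) = ((γ+1:ℝ):ℂ) := by push_cast; ring
    rw [this]
    simp [Complex.re_ofReal_mul, Complex.im_ofReal_mul, Complex.log_re, Complex.log_im,
      Real.rpow_def_of_pos habs]
    ring_nf
  have key : (1 - (1 + (γ:ℂ) * z) * (1 - z) ^ (γ:ℂ))
      = 1 - (1+(γ:ℂ)) * (1 - z) ^ (γ:ℂ) + (γ:ℂ) * (1 - z) ^ ((γ:ℂ)+1) := by
    rw [← hmul]; ring
  rw [hf, key]
  have hc : ((γ:ℂ) * (1 + (γ:ℂ))) = ((γ * (1+γ) : ℝ) : ℂ) := by push_cast; ring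
  rw [hc]
  simp only [Complex.add_im, Complex.div_ofReal_im, Complex.conj_im, Complex.sub_im,
    Complex.one_im, Complex.mul_im, Complex.add_re, Complex.add_im, Complex.one_re,
    Complex.ofReal_re, Complex.ofReal_im, him]
  field_simp
  ring
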